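/- For each i = 1,…,d, let 𝒵_i ⊆ L^q(Ω; ℝ₊) (1/p + 1/q = 1) be a family of nonnegative random variables such that E(−ξζ) ≤ r_i(ξ)·E(ζ) for every ξ ∈ L^p(Ω; ℝ) and every ζ ∈ 𝒵_i (as holds when r_i admits the dual representation r_i(ξ) = sup_{ζ∈𝒵_i} E(−ξζ)/E(ζ)). Let 𝒵 be any nonempty family of random vectors Z = (ζ₁,…,ζ_d) ∈ L^q(Ω; ℝ₊^d) with ζ_i ∈ 𝒵_i for each i. Then for every set-valued portfolio 𝐗 with a p-integrable selection, ρ_s(𝐗) ⊆ ρ_𝒵(𝐗), where ρ_𝒵(𝐗) = ⋂_{Z ∈ 𝒵, u ∈ ℝ₊^d} {x ∈ ℝ^d : ⟨x, u ⊙ E Z⟩ ≥ −E h_𝐗(u ⊙ Z)} with coordinatewise product u ⊙ Z. -/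

import Mathlib

open MeasureTheory Set Filter
open scoped Pointwise ENNReal RealInnerProductSpace

noncomputable section

/-- `ℝ^d` with the Euclidean norm. -/
abbrev Vec (d : ℕ) := EuclideanSpace ℝ (Fin d)

/-- Effros measurability of a set-valued map: `{ω : X(ω) ∩ G ≠ ∅}` is measurable
for every open `G`. -/
def EffrosMeasurable {Ω : Type*} [MeasurableSpace Ω] {d : ℕ} (X : Ω → Set (Vec d)) : Prop :=
  ∀ G : Set (Vec d), IsOpen G → MeasurableSet {ω | (X ω ∩ G).Nonempty}

/-- A set-valued portfolio: an Effros-measurable map with nonempty closed convex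
lower-set values. -/
structure IsPortfolio {Ω : Type*} [MeasurableSpace Ω] {d : ℕ} (X : Ω → Set (Vec d)) : Prop where
  effros : EffrosMeasurable X
  nonempty : ∀ ω, (X ω).Nonempty
  isClosed : ∀ ω, IsClosed (X ω)
  convex : ∀ ω, Convex ℝ (X ω)
  lower : ∀ ω, ∀ x ∈ X ω, ∀ y : Vec d, (∀ i, y i ≤ x i) → y ∈ X ω

/-- A coherent risk measure on `L^p(Ω; ℝ)` with values in `ℝ ∪ {+∞} ⊆ EReal`:
monotone (antitone in the gain), cash invariant, subadditive and positively homogeneous. -/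
structure IsCoherent {Ω : Type*} [MeasurableSpace Ω] (μ : Measure Ω) (p : ℝ≥0∞)
    (r : (Ω → ℝ) → EReal) : Prop where
  ne_bot : ∀ ξ : Ω → ℝ, MemLp ξ p μ → r ξ ≠ ⊥
  mono : ∀ ξ η : Ω → ℝ, MemLp ξ p μ → MemLp η p μ → (∀ᵐ ω ∂μ, ξ ω ≤ η ω) → r η ≤ r ξ
  cash : ∀ ξ : Ω → ℝ, MemLp ξ p μ → ∀ c : ℝ, r (fun ω => ξ ω + c) = r ξ - (c : EReal)
  subadd : ∀ ξ η : Ω → ℝ, MemLp ξ p μ → MemLp η p μ →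
    r (fun ω => ξ ω + η ω) ≤ r ξ + r η
  homog : ∀ ξ : Ω → ℝ, MemLp ξ p μ → ∀ c : ℝ, 0 < c →
    r (fun ω => c * ξ ω) = (c : EReal) * r ξ

/-- The selection risk measure `ρ_{s,0}(𝐗)`: the set of deterministic `x ∈ ℝ^d`
for which `𝐗 + x` has a selection with all individually acceptable components. -/
def rho0 {Ω : Type*} [MeasurableSpace Ω] (μ : Measure Ω) (p : ℝ≥0∞) {d : ℕ}
    (r : Fin d → (Ω → ℝ) → EReal) (X : Ω → Set (Vec d)) : Set (Vec d) :=
  {x | ∃ ξ : Ω → Vec d, MemLp ξ p μ ∧ (∀ᵐ ω ∂μ, ξ ω ∈ X ω) ∧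
        ∀ i, r i (fun ω => ξ ω i + x i) ≤ 0}

/-- The support function `h_M(u) = sup{⟨u,x⟩ : x ∈ M}`, with values in `EReal`. -/
def suppFn {d : ℕ} (M : Set (Vec d)) (u : Vec d) : EReal :=
  ⨆ x ∈ M, ((⟪u, x⟫ : ℝ) : EReal)

/-- The lower-bound risk measure `ρ_𝒵(𝐗)` of (4.2)/(4.3): the intersection over
`Z ∈ 𝒵` and `u ∈ ℝ₊^d` of the half-spaces `{x : ⟨x, u ⊙ EZ⟩ ≥ −E h_𝐗(u ⊙ Z)}`;
a constraint is vacuous when `E h_𝐗(u ⊙ Z) = +∞`, i.e. when `h_𝐗(u ⊙ Z)` fails to be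
a.s. finite with integrable (real-valued) version. -/
def rhoZ {Ω : Type*} [MeasurableSpace Ω] (μ : Measure Ω) {d : ℕ}
    (𝒵 : Set (Ω → Vec d)) (X : Ω → Set (Vec d)) : Set (Vec d) :=
  {x | ∀ Z ∈ 𝒵, ∀ u : Vec d, (∀ i, 0 ≤ u i) →
    (∀ᵐ ω ∂μ, suppFn (X ω) (WithLp.toLp 2 (fun i => u i * Z ω i) : Vec d) ≠ ⊤) →
    Integrable (fun ω => (suppFn (X ω) (WithLp.toLp 2 (fun i => u i * Z ω i) : Vec d)).toReal) μ →
    -∫ ω, (suppFn (X ω) (WithLp.toLp 2 (fun i => u i * Z ω i) : Vec d)).toReal ∂μ ≤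
      ⟪x, (WithLp.toLp 2 (fun i => u i * ∫ ω, Z ω i ∂μ) : Vec d)⟫}

/-- Theorem 4.2 (lower bound / domination): if the families `𝒵_i` dualize the marginal
risk measures `r_i` from below, then `ρ_s(𝐗) ⊆ ρ_𝒵(𝐗)` for any family `𝒵` of random
vectors with `i`-th components in `𝒵_i`. -/
theorem statement7 {Ω : Type*} [MeasurableSpace Ω] (μ : Measure Ω) [IsProbabilityMeasure μ]
    [μ.IsComplete] {d : ℕ} (p q : ℝ≥0∞) (hp : 1 ≤ p) (hpq : 1/p + 1/q = 1)
    (r : Fin d → (Ω → ℝ) → EReal) (hr : ∀ i, IsCoherent μ p (r i))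
    (𝒵i : Fin d → Set (Ω → ℝ))
    (h𝒵i : ∀ i, ∀ ζ ∈ 𝒵i i, MemLp ζ q μ ∧ (∀ᵐ ω ∂μ, 0 ≤ ζ ω) ∧
      ∀ ξ : Ω → ℝ, MemLp ξ p μ →
        ((∫ ω, -ξ ω * ζ ω ∂μ : ℝ) : EReal) ≤ r i ξ * ((∫ ω, ζ ω ∂μ : ℝ) : EReal))
    (𝒵 : Set (Ω → Vec d)) (h𝒵ne : 𝒵.Nonempty)
    (h𝒵 : ∀ Z ∈ 𝒵, MemLp Z q μ ∧ ∀ i, (fun ω => Z ω i) ∈ 𝒵i i)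
    (X : Ω → Set (Vec d)) (hX : IsPortfolio X)
    (hsel : ∃ ξ : Ω → Vec d, MemLp ξ p μ ∧ ∀ᵐ ω ∂μ, ξ ω ∈ X ω) :
    closure (rho0 μ p r X) ⊆ rhoZ μ 𝒵 X := by
  have hq1 : 1 ≤ q := by
    have h1q : 1/q ≤ 1 := by
      calc 1/q ≤ 1/p + 1/q := le_add_self
      _ = 1 := hpq
    rw [one_div] at h1q; exact ENNReal.inv_le_one.mp h1q
  intro x hx Z hZ u hu hfin hint
  set w : Ω → Vec d := fun ω => (WithLp.toLp 2 (fun i => u i * Z ω i) : Vec d) with hw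
  set v : Vec d := (WithLp.toLp 2 (fun i => u i * ∫ ω, Z ω i ∂μ) : Vec d) with hv
  set c : ℝ := ∫ ω, (suppFn (X ω) (w ω)).toReal ∂μ with hc
  show -c ≤ ⟪x, v⟫
  have hclosed : IsClosed {y : Vec d | -c ≤ ⟪y, v⟫} :=
    isClosed_le continuous_const (Continuous.inner continuous_id continuous_const)
  refine closure_minimal (fun y hy => ?_) hclosed hx
  obtain ⟨ξ, hξp, hξX, hracc⟩ := hy
  -- coordinate memberships
  have hξi : ∀ i, MemLp (fun ω => ξ ω i) p μ := fun i =>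
    (EuclideanSpace.proj (𝕜 := ℝ) i).comp_memLp' hξp
  have hZmem := (h𝒵 Z hZ).2
  have hZiq : ∀ i, MemLp (fun ω => Z ω i) q μ := fun i => (h𝒵i i _ (hZmem i)).1
  have hZipos : ∀ i, ∀ᵐ ω ∂μ, 0 ≤ Z ω i := fun i => (h𝒵i i _ (hZmem i)).2.1
  have hZint : ∀ i, Integrable (fun ω => Z ω i) μ := fun i => (hZiq i).integrable hq1
  -- Hölder: products are integrable
  have hmul : ∀ i, Integrable (fun ω => Z ω i * ξ ω i) μ := by
    intro i
    have : MemLp ((fun ω => Z ω i) • (fun ω => ξ ω i)) 1 μ := by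
      refine MemLp.smul (hξi i) (hZiq i) (hpqr := ⟨?_⟩)
      simpa [one_div, add_comm] using hpq
    exact memLp_one_iff_integrable.mp this
  have hEZ : ∀ i, 0 ≤ ∫ ω, Z ω i ∂μ := fun i => integral_nonneg_of_ae (hZipos i)
  -- Step A: for each i, -(y i * ∫ Z_i) ≤ ∫ Z_i ξ_i
  have keyA : ∀ i, -(y i * ∫ ω, Z ω i ∂μ) ≤ ∫ ω, Z ω i * ξ ω i ∂μ := by
    intro i
    set η : Ω → ℝ := fun ω => ξ ω i + y i with hη
    have hηp : MemLp η p μ := (hξi i).add (memLp_const (y i))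
    have hdual := (h𝒵i i _ (hZmem i)).2.2 η hηp
    have h2 : r i η * ((∫ ω, Z ω i ∂μ : ℝ) : EReal) ≤ 0 :=
      mul_nonpos_of_nonpos_of_nonneg (hracc i) (EReal.coe_nonneg.mpr (hEZ i))
    have h3 : (∫ ω, -η ω * Z ω i ∂μ : ℝ) ≤ 0 := EReal.coe_nonpos.mp (hdual.trans h2)
    have h4 : ∫ ω, -η ω * Z ω i ∂μ = -∫ ω, η ω * Z ω i ∂μ := by
      simp_rw [neg_mul]; exact integral_neg _
    rw [h4, neg_nonpos] at h3
    have h5 : ∫ ω, η ω * Z ω i ∂μ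
        = (∫ ω, Z ω i * ξ ω i ∂μ) + y i * ∫ ω, Z ω i ∂μ := by
      have : ∀ ω, η ω * Z ω i = Z ω i * ξ ω i + y i * Z ω i := by
        intro ω; simp [hη]; ring
      simp_rw [this]
      rw [integral_add (hmul i) ((hZint i).const_mul (y i)), integral_const_mul]
    rw [h5] at h3
    linarith
  -- Step B: a.e. pointwise bound
  have haeb : ∀ᵐ ω ∂μ, (∑ i, u i * (Z ω i * ξ ω i)) ≤ (suppFn (X ω) (w ω)).toReal := by
    filter_upwards [hξX, hfin] with ω hmem hne
    have hinner : ⟪w ω, ξ ω⟫ = ∑ i, u i * (Z ω i * ξ ω i) := by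
      simp [PiLp.inner_apply, RCLike.inner_apply, conj_trivial, w, mul_assoc]
      exact Finset.sum_congr rfl fun i _ => by ring
    have hle : ((⟪w ω, ξ ω⟫ : ℝ) : EReal) ≤ suppFn (X ω) (w ω) :=
      le_iSup₂ (f := fun z (_ : z ∈ X ω) => ((⟪w ω, z⟫ : ℝ) : EReal)) (ξ ω) hmem
    have hbot : suppFn (X ω) (w ω) ≠ ⊥ := by
      intro h; rw [h] at hle; exact (EReal.coe_ne_bot _) (le_bot_iff.mp hle)
    rw [← EReal.coe_toReal hne hbot, EReal.coe_le_coe_iff, hinner] at hle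
    exact hle
  -- Step C: integrate
  have hg : Integrable (fun ω => ∑ i, u i * (Z ω i * ξ ω i)) μ :=
    integrable_finset_sum _ fun i _ => (hmul i).const_mul (u i)
  have hC : (∑ i, u i * ∫ ω, Z ω i * ξ ω i ∂μ) ≤ c := by
    have := integral_mono_ae hg hint haeb
    rw [integral_finset_sum _ (fun i _ => (hmul i).const_mul (u i))] at this
    simp_rw [integral_const_mul] at this
    exact this
  -- Step D: combine
  have hD : -⟪y, v⟫ ≤ ∑ i, u i * ∫ ω, Z ω i * ξ ω i ∂μ := by
    have hyv : ⟪y, v⟫ = ∑ i, y i * (u i * ∫ ω, Z ω i ∂μ) := by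
      simp [PiLp.inner_apply, RCLike.inner_apply, conj_trivial, v]
      exact Finset.sum_congr rfl fun i _ => by ring
    rw [hyv, ← Finset.sum_neg_distrib]
    refine Finset.sum_le_sum fun i _ => ?_
    have := mul_le_mul_of_nonneg_left (keyA i) (hu i)
    calc -(y i * (u i * ∫ ω, Z ω i ∂μ)) = u i * -(y i * ∫ ω, Z ω i ∂μ) := by ring
    _ ≤ u i * ∫ ω, Z ω i * ξ ω i ∂μ := this
  have := hD.trans hC
  show -c ≤ ⟪y, v⟫
  linarith
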